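/- Every path on t ≥ 2 vertices and every even cycle contain an induced subgraph on at least half of their vertices in which every vertex has odd degree; consequently, every bipartite graph with maximum degree at most 2 and no isolated vertices satisfies f_o(G) ≥ |V(G)|/2. -/

import Mathlib

open Classical in
/-- Degree of `v` within the subgraph of `G` induced by the finite vertex set `s`. -/
noncomputable def indDeg {V : Type*} (G : SimpleGraph V) (s : Finset V) (v : V) : ℕ :=
  (s.filter (fun w => G.Adj v w)).card

/-- `s` induces a subgraph of `G` in which every vertex has odd degree. -/
def IsOddSet {V : Type*} (G : SimpleGraph V) (s : Finset V) : Prop :=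
  ∀ v ∈ s, Odd (indDeg G s v)

/-- `f_o(G)`: maximum order of an induced subgraph with all degrees odd. -/
noncomputable def fo {V : Type*} (G : SimpleGraph V) : ℕ :=
  sSup {n | ∃ s : Finset V, IsOddSet G s ∧ s.card = n}

lemma fin2_eq {a b c : Fin 2} (h1 : a ≠ c) (h2 : b ≠ c) : a = b := by
  fin_cases a <;> fin_cases b <;> fin_cases c <;> simp_all

open Finset in
open Classical in
lemma key {V : Type*} (G : SimpleGraph V) (c : V → Fin 2)
    (hc : ∀ a b, G.Adj a b → c a ≠ c b) :
    ∀ (s : Finset V), (∀ v ∈ s, 1 ≤ indDeg G s v) → (∀ v ∈ s, indDeg G s v ≤ 2) →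
    ∃ t, t ⊆ s ∧ IsOddSet G t ∧ s.card ≤ 2 * t.card := by
  intro s
  induction s using Finset.strongInduction with
  | _ s ih =>
    intro hmin hmax
    by_cases hs : s = ∅
    · exact ⟨∅, by simp [IsOddSet, hs]⟩
    -- set up notation
    set N : V → Finset V := fun x => s.filter (fun w => G.Adj x w) with hN
    have hNdeg : ∀ x, indDeg G s x = (N x).card := fun x => rfl
    have hNmem : ∀ x y, y ∈ N x ↔ y ∈ s ∧ G.Adj x y := by
      intro x y; simp [hN]
    have hNsym : ∀ x y, x ∈ s → y ∈ N x → x ∈ N y := by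
      intro x y hx hy
      rw [hNmem] at hy ⊢
      exact ⟨hx, hy.2.symm⟩
    -- choose u : either a degree-1 vertex, or all degrees are 2
    have hchoice : ∃ u ∈ s, ((N u).card = 1 ∨ ∀ y ∈ s, (N y).card = 2) := by
      by_cases h1 : ∃ x ∈ s, (N x).card = 1
      · obtain ⟨x, hx, hx1⟩ := h1
        exact ⟨x, hx, Or.inl hx1⟩
      · obtain ⟨x, hx⟩ := Finset.nonempty_of_ne_empty hs
        refine ⟨x, hx, Or.inr fun y hy => ?_⟩
        push_neg at h1
        have h1' := h1 y hy
        have := hmin y hy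
        have := hmax y hy
        rw [hNdeg] at *
        omega
    obtain ⟨u, hu, hcase⟩ := hchoice
    have humin := hmin u hu
    rw [hNdeg] at humin
    obtain ⟨v, hvN⟩ := Finset.card_pos.mp humin
    have hv : v ∈ s := ((hNmem u v).mp hvN).1
    have huv : G.Adj u v := ((hNmem u v).mp hvN).2
    have huNv : u ∈ N v := hNsym u v hu hvN
    -- the removal set
    set R0 : Finset V := insert u (insert v (N u ∪ N v)) with hR0
    set I : Finset V := (s \ R0).filter (fun y => N y ⊆ R0) with hI
    set R : Finset V := R0 ∪ I with hR
    have hR0s : R0 ⊆ s := by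
      intro x hx
      rw [hR0] at hx
      simp only [mem_insert, mem_union] at hx
      rcases hx with rfl | rfl | hx | hx
      · exact hu
      · exact hv
      · exact (filter_subset _ _) hx
      · exact (filter_subset _ _) hx
    have hRs : R ⊆ s := by
      rw [hR]
      refine union_subset hR0s ?_
      intro x hx
      rw [hI] at hx
      exact (sdiff_subset) (mem_of_mem_filter _ hx)
    have hNuR0 : N u ⊆ R0 := by
      rw [hR0]; intro x hx
      exact mem_insert_of_mem (mem_insert_of_mem (mem_union_left _ hx))
    have hNvR0 : N v ⊆ R0 := by
      rw [hR0]; intro x hx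
      exact mem_insert_of_mem (mem_insert_of_mem (mem_union_right _ hx))
    have huR0 : u ∈ R0 := by rw [hR0]; exact mem_insert_self _ _
    have hvR0 : v ∈ R0 := by rw [hR0]; exact mem_insert_of_mem (mem_insert_self _ _)
    set s' : Finset V := s \ R with hs'
    -- facts about s \ R
    have hnotR : ∀ y ∈ s', y ∈ s ∧ y ∉ R0 ∧ y ∉ I := by
      intro y hy
      rw [hs', mem_sdiff, hR, mem_union] at hy
      push_neg at hy
      exact ⟨hy.1, hy.2.1, hy.2.2⟩
    -- min degree on s'
    have hmin' : ∀ y ∈ s', 1 ≤ indDeg G s' y := by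
      intro y hy
      obtain ⟨hys, hyR0, hyI⟩ := hnotR y hy
      have : ¬ (N y ⊆ R0) := by
        intro hsub
        exact hyI (by rw [hI]; exact mem_filter.mpr ⟨mem_sdiff.mpr ⟨hys, hyR0⟩, hsub⟩)
      obtain ⟨z, hzN, hzR0⟩ := not_subset.mp this
      have hzs : z ∈ s := ((hNmem y z).mp hzN).1
      have hzadj : G.Adj y z := ((hNmem y z).mp hzN).2
      have hzI : z ∉ I := by
        intro hzI
        rw [hI, mem_filter] at hzI
        exact hyR0 (hzI.2 (hNsym y z hys hzN))
      have hzs' : z ∈ s' := by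
        rw [hs', mem_sdiff, hR, mem_union]
        push_neg
        exact ⟨hzs, hzR0, hzI⟩
      rw [indDeg]
      refine Finset.card_pos.mpr ⟨z, ?_⟩
      exact mem_filter.mpr ⟨hzs', hzadj⟩
    -- max degree on s'
    have hmax' : ∀ y ∈ s', indDeg G s' y ≤ 2 := by
      intro y hy
      have hys : y ∈ s := (hnotR y hy).1
      calc indDeg G s' y ≤ indDeg G s y := by
            rw [indDeg, indDeg]
            exact card_le_card (filter_subset_filter _ (by rw [hs']; exact sdiff_subset))
        _ ≤ 2 := hmax y hys
    have hss : s' ⊂ s := by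
      rw [hs']
      exact Finset.sdiff_ssubset hRs ⟨u, by rw [hR, mem_union]; exact Or.inl huR0⟩
    obtain ⟨t', ht's, ht'odd, ht'card⟩ := ih s' hss hmin' hmax'
    -- the new odd set
    refine ⟨insert u (insert v t'), ?_, ?_, ?_⟩
    · intro x hx
      simp only [mem_insert] at hx
      rcases hx with rfl | rfl | hx
      · exact hu
      · exact hv
      · exact sdiff_subset (by rw [← hs']; exact ht's hx)
    · -- IsOddSet
      have hut' : u ∉ t' := fun h => (hnotR u (ht's h)).2.1 huR0
      have hvt' : v ∉ t' := fun h => (hnotR v (ht's h)).2.1 hvR0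
      have hadjt' : ∀ y ∈ t', ¬ G.Adj y u ∧ ¬ G.Adj y v := by
        intro y hy
        have hys' := ht's hy
        obtain ⟨hys, hyR0, _⟩ := hnotR y hys'
        constructor
        · intro h
          exact hyR0 (hNuR0 ((hNmem u y).mpr ⟨hys, h.symm⟩))
        · intro h
          exact hyR0 (hNvR0 ((hNmem v y).mpr ⟨hys, h.symm⟩))
      intro y hy
      simp only [mem_insert] at hy
      rcases hy with hy | hy | hy
      · -- y = u
        subst hy
        have : (insert y (insert v t')).filter (fun w => G.Adj y w) = {v} := by
          ext w
          simp only [mem_filter, mem_insert, mem_singleton]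
          constructor
          · rintro ⟨rfl | rfl | hw, hadj⟩
            · exact absurd hadj (G.loopless.irrefl _)
            · rfl
            · exact absurd hadj.symm (hadjt' w hw).1
          · rintro rfl
            exact ⟨Or.inr (Or.inl rfl), huv⟩
        rw [indDeg, this]
        simp
      · -- y = v
        subst hy
        have : (insert u (insert y t')).filter (fun w => G.Adj y w) = {u} := by
          ext w
          simp only [mem_filter, mem_insert, mem_singleton]
          constructor
          · rintro ⟨rfl | rfl | hw, hadj⟩
            · rfl
            · exact absurd hadj (G.loopless.irrefl _)
            · exact absurd hadj.symm (hadjt' w hw).2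
          · rintro rfl
            exact ⟨Or.inl rfl, huv.symm⟩
        rw [indDeg, this]
        simp
      · -- y ∈ t'
        have h1 : ¬ G.Adj y u := (hadjt' y hy).1
        have h2 : ¬ G.Adj y v := (hadjt' y hy).2
        have : (insert u (insert v t')).filter (fun w => G.Adj y w)
            = t'.filter (fun w => G.Adj y w) := by
          rw [filter_insert, if_neg h1, filter_insert, if_neg h2]
        rw [indDeg, this]
        exact ht'odd y hy
    · -- cardinality
      have hut' : u ∉ insert v t' := by
        simp only [mem_insert]
        push_neg
        exact ⟨G.ne_of_adj huv, fun h => (hnotR u (ht's h)).2.1 huR0⟩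
      have hvt' : v ∉ t' := fun h => (hnotR v (ht's h)).2.1 hvR0
      have htcard : (insert u (insert v t')).card = t'.card + 2 := by
        rw [card_insert_of_notMem hut', card_insert_of_notMem hvt']
      have hsplit : s'.card + R.card = s.card := Finset.card_sdiff_add_card_eq_card hRs
      have hdisj : Disjoint R0 I := by
        rw [hI]
        exact Finset.disjoint_left.mpr fun a haR0 haI =>
          (mem_sdiff.mp (mem_of_mem_filter _ haI)).2 haR0
      have hRcard : R.card = R0.card + I.card := by
        rw [hR, card_union_of_disjoint hdisj]
      -- bound R.card ≤ 4 by cases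
      have hR4 : R.card ≤ 4 := by
        rcases hcase with hdeg1 | hdeg2
        · -- case: deg u = 1, so N u = {v}
          have hNu : N u = {v} := by
            obtain ⟨a, ha⟩ := Finset.card_eq_one.mp hdeg1
            rw [ha] at hvN ⊢
            rw [mem_singleton] at hvN
            subst hvN; rfl
          have hsub : R0 ⊆ insert u (insert v (N v \ {u})) := by
            intro x hx
            rw [hR0] at hx
            simp only [mem_insert, mem_union, mem_sdiff, mem_singleton] at hx ⊢
            rcases hx with h | h | h | h
            · exact Or.inl h
            · exact Or.inr (Or.inl h)
            · rw [hNu, mem_singleton] at h; exact Or.inr (Or.inl h)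
            · by_cases hxu : x = u
              · exact Or.inl hxu
              · exact Or.inr (Or.inr ⟨h, hxu⟩)
          have hNvu : (N v \ {u}).card ≤ 1 := by
            have h1 : ({u} : Finset V) ⊆ N v := singleton_subset_iff.mpr huNv
            have h2 := hmax v hv
            rw [hNdeg] at h2
            rw [card_sdiff_of_subset h1, card_singleton]
            omega
          have hR0card : R0.card ≤ 3 := by
            calc R0.card ≤ (insert u (insert v (N v \ {u}))).card := card_le_card hsub
              _ ≤ (insert v (N v \ {u})).card + 1 := card_insert_le _ _
              _ ≤ (N v \ {u}).card + 1 + 1 := by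
                  have := card_insert_le v (N v \ {u}); omega
              _ ≤ 3 := by omega
          have hIcard : I.card ≤ 1 := by
            rw [Finset.card_le_one]
            have hstruct : ∀ y ∈ I, ∃ b, b ∈ N v \ {u} ∧ y ∈ N b \ {v} := by
              intro y hy
              rw [hI, mem_filter, mem_sdiff] at hy
              obtain ⟨⟨hys, hyR0⟩, hysub⟩ := hy
              have hymin := hmin y hys
              rw [hNdeg] at hymin
              obtain ⟨b, hbN⟩ := Finset.card_pos.mp hymin
              have hbR0 := hysub hbN
              have hbs : b ∈ s := ((hNmem y b).mp hbN).1
              have hbadj : G.Adj y b := ((hNmem y b).mp hbN).2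
              have hyadju : ¬ G.Adj y u := by
                intro h
                have h2 : y ∈ N u := (hNmem u y).mpr ⟨hys, h.symm⟩
                rw [hNu, mem_singleton] at h2
                exact hyR0 (h2 ▸ hvR0)
              have hyadjv : ¬ G.Adj y v := fun h =>
                hyR0 (hNvR0 ((hNmem v y).mpr ⟨hys, h.symm⟩))
              have hbu : b ≠ u := fun h => hyadju (h ▸ hbadj)
              have hbv : b ≠ v := fun h => hyadjv (h ▸ hbadj)
              have hbNv : b ∈ N v := by
                rw [hR0] at hbR0
                simp only [mem_insert, mem_union] at hbR0
                rcases hbR0 with h | h | h | h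
                · exact absurd h hbu
                · exact absurd h hbv
                · rw [hNu, mem_singleton] at h; exact absurd h hbv
                · exact h
              refine ⟨b, mem_sdiff.mpr ⟨hbNv, by simpa using hbu⟩,
                mem_sdiff.mpr ⟨hNsym y b hys hbN, ?_⟩⟩
              simp only [mem_singleton]
              intro h
              exact hyR0 (h ▸ hvR0)
            intro y1 hy1 y2 hy2
            obtain ⟨b1, hb1, hy1b⟩ := hstruct y1 hy1
            obtain ⟨b2, hb2, hy2b⟩ := hstruct y2 hy2
            have hb12 : b1 = b2 := Finset.card_le_one.mp hNvu b1 hb1 b2 hb2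
            subst hb12
            have hb1Nv : b1 ∈ N v := (mem_sdiff.mp hb1).1
            have hb1s : b1 ∈ s := ((hNmem v b1).mp hb1Nv).1
            have hvNb1 : v ∈ N b1 := hNsym v b1 hv hb1Nv
            have hcard : (N b1 \ {v}).card ≤ 1 := by
              have h1 : ({v} : Finset V) ⊆ N b1 := singleton_subset_iff.mpr hvNb1
              have h2 := hmax b1 hb1s
              rw [hNdeg] at h2
              rw [card_sdiff_of_subset h1, card_singleton]
              omega
            exact Finset.card_le_one.mp hcard y1 hy1b y2 hy2b
          omega
        · -- case: all degrees are 2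
          have hNu2 := hdeg2 u hu
          have hNv2 := hdeg2 v hv
          have hNuv : (N u \ {v}).card ≤ 1 := by
            rw [card_sdiff_of_subset (singleton_subset_iff.mpr hvN), card_singleton]; omega
          have hNvu : (N v \ {u}).card ≤ 1 := by
            rw [card_sdiff_of_subset (singleton_subset_iff.mpr huNv), card_singleton]; omega
          have hsub : R0 ⊆ insert u (insert v ((N u \ {v}) ∪ (N v \ {u}))) := by
            intro x hx
            rw [hR0] at hx
            simp only [mem_insert, mem_union, mem_sdiff, mem_singleton] at hx ⊢
            rcases hx with h | h | h | h
            · exact Or.inl h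
            · exact Or.inr (Or.inl h)
            · by_cases h2 : x = v
              · exact Or.inr (Or.inl h2)
              · exact Or.inr (Or.inr (Or.inl ⟨h, h2⟩))
            · by_cases h2 : x = u
              · exact Or.inl h2
              · exact Or.inr (Or.inr (Or.inr ⟨h, h2⟩))
          have hR0card : R0.card ≤ 4 := by
            calc R0.card ≤ _ := card_le_card hsub
              _ ≤ (insert v ((N u \ {v}) ∪ (N v \ {u}))).card + 1 := card_insert_le _ _
              _ ≤ ((N u \ {v}) ∪ (N v \ {u})).card + 1 + 1 := by
                  have := card_insert_le v ((N u \ {v}) ∪ (N v \ {u})); omega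
              _ ≤ 4 := by
                  have := card_union_le (N u \ {v}) (N v \ {u}); omega
          have hIempty : I = ∅ := by
            rw [Finset.eq_empty_iff_forall_notMem]
            intro y hy
            rw [hI, mem_filter, mem_sdiff] at hy
            obtain ⟨⟨hys, hyR0⟩, hysub⟩ := hy
            have hyadju : ¬ G.Adj y u := fun h =>
              hyR0 (hNuR0 ((hNmem u y).mpr ⟨hys, h.symm⟩))
            have hyadjv : ¬ G.Adj y v := fun h =>
              hyR0 (hNvR0 ((hNmem v y).mpr ⟨hys, h.symm⟩))
            have hy2 : 1 < (N y).card := by rw [hdeg2 y hys]; omega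
            obtain ⟨p, hpN, q, hqN, hpq⟩ := Finset.one_lt_card.mp hy2
            have hru : ∀ r ∈ N y, r ≠ u := fun r hr h =>
              hyadju (h ▸ ((hNmem y r).mp hr).2)
            have hrv : ∀ r ∈ N y, r ≠ v := fun r hr h =>
              hyadjv (h ▸ ((hNmem y r).mp hr).2)
            have hrR0 : ∀ r ∈ N y, r ∈ N u ∨ r ∈ N v := by
              intro r hr
              have h3 := hysub hr
              rw [hR0] at h3
              simp only [mem_insert, mem_union] at h3
              rcases h3 with h | h | h | h
              · exact absurd h (hru r hr)
              · exact absurd h (hrv r hr)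
              · exact Or.inl h
              · exact Or.inr h
            have hcu : ∀ r, r ∈ N u → c r ≠ c u :=
              fun r hr => (hc u r ((hNmem u r).mp hr).2).symm
            have hcv : ∀ r, r ∈ N v → c r ≠ c v :=
              fun r hr => (hc v r ((hNmem v r).mp hr).2).symm
            have hcuv : c u ≠ c v := hc u v huv
            have hpqc : c p = c q :=
              fin2_eq (Ne.symm (hc y p ((hNmem y p).mp hpN).2))
                (Ne.symm (hc y q ((hNmem y q).mp hqN).2))
            rcases hrR0 p hpN with hp | hp <;> rcases hrR0 q hqN with hq | hq
            · exact hpq (Finset.card_le_one.mp hNuv p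
                (mem_sdiff.mpr ⟨hp, by simp only [mem_singleton]; exact hrv p hpN⟩) q
                (mem_sdiff.mpr ⟨hq, by simp only [mem_singleton]; exact hrv q hqN⟩))
            · have h1 : c q ≠ c u := by rw [← hpqc]; exact hcu p hp
              exact hcuv (fin2_eq (Ne.symm h1) (Ne.symm (hcv q hq)))
            · have h1 : c p ≠ c u := by rw [hpqc]; exact hcu q hq
              exact hcuv (fin2_eq (Ne.symm h1) (Ne.symm (hcv p hp)))
            · exact hpq (Finset.card_le_one.mp hNvu p
                (mem_sdiff.mpr ⟨hp, by simp only [mem_singleton]; exact hru p hpN⟩) q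
                (mem_sdiff.mpr ⟨hq, by simp only [mem_singleton]; exact hru q hqN⟩))
          have hIc : I.card = 0 := by rw [hIempty, card_empty]
          omega
      omega



open Classical in
lemma indDeg_pos' {V : Type*} (G : SimpleGraph V) (s : Finset V) (v w : V)
    (hw : w ∈ s) (h : G.Adj v w) : 1 ≤ indDeg G s v := by
  rw [indDeg]
  exact Finset.card_pos.mpr ⟨w, Finset.mem_filter.mpr ⟨hw, h⟩⟩

open Classical in
lemma indDeg_le_of_subset {V : Type*} [Fintype V] (G : SimpleGraph V) (v : V)
    (F : Finset V) (hF : ∀ x, G.Adj v x → x ∈ F) : indDeg G Finset.univ v ≤ F.card := by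
  rw [indDeg]
  exact Finset.card_le_card fun x hx => hF x (Finset.mem_filter.mp hx).2

open Finset in
open Classical in
lemma part3 (V : Type) [Fintype V] (G : SimpleGraph V) [DecidableRel G.Adj]
    (hcol : G.Colorable 2) (hdeg : ∀ v, G.degree v ≤ 2) (hiso : ∀ v, ∃ w, G.Adj v w) :
    Fintype.card V ≤ 2 * fo G := by
  obtain ⟨co⟩ := hcol
  have hfilter : ∀ v : V, indDeg G Finset.univ v ≤ G.degree v := by
    intro v
    exact indDeg_le_of_subset G v (G.neighborFinset v)
      (fun x h => (SimpleGraph.mem_neighborFinset _ _ _).mpr h)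
  obtain ⟨t, hts, hodd, hcard⟩ := key G co (fun a b h => co.valid h) Finset.univ
    (fun v _ => by
      obtain ⟨w, hw⟩ := hiso v
      exact indDeg_pos' G _ v w (Finset.mem_univ _) hw)
    (fun v _ => le_trans (hfilter v) (hdeg v))
  rw [card_univ] at hcard
  have hle : t.card ≤ fo G := by
    refine le_csSup ⟨Fintype.card V, ?_⟩ ⟨t, hodd, rfl⟩
    rintro n ⟨s, _, rfl⟩
    exact le_trans (card_le_card (subset_univ s)) (le_of_eq card_univ)
  omega

open SimpleGraph in
lemma part1 (t : ℕ) (ht : 2 ≤ t) : t ≤ 2 * fo (SimpleGraph.pathGraph t) := by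
  classical
  letI : DecidableRel (pathGraph t).Adj := Classical.decRel _
  have hcol : (pathGraph t).Colorable 2 := by
    have := (pathGraph.bicoloring t).colorable
    rwa [Fintype.card_bool] at this
  have hdeg : ∀ v : Fin t, (pathGraph t).degree v ≤ 2 := by
    intro v
    have hsub : (pathGraph t).neighborFinset v ⊆
        insert (⟨v.val - 1, lt_of_le_of_lt (Nat.sub_le _ _) v.isLt⟩ : Fin t)
          {(if h : v.val + 1 < t then (⟨v.val + 1, h⟩ : Fin t) else v)} := by
      intro w hw
      rw [SimpleGraph.mem_neighborFinset, pathGraph_adj] at hw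
      simp only [Finset.mem_insert, Finset.mem_singleton]
      rcases hw with h | h
      · right
        have hlt : v.val + 1 < t := h ▸ w.isLt
        rw [dif_pos hlt]
        apply Fin.ext
        show w.val = v.val + 1
        omega
      · left
        apply Fin.ext
        show w.val = v.val - 1
        omega
    calc (pathGraph t).degree v ≤ _ := Finset.card_le_card hsub
      _ ≤ 2 := le_trans (Finset.card_insert_le _ _) (by simp)
  have hiso : ∀ v : Fin t, ∃ w, (pathGraph t).Adj v w := by
    intro v
    by_cases h : v.val + 1 < t
    · exact ⟨⟨v.val + 1, h⟩, by rw [pathGraph_adj]; left; rfl⟩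
    · have hv : 1 ≤ v.val := by have := v.isLt; omega
      exact ⟨⟨v.val - 1, lt_of_le_of_lt (Nat.sub_le _ _) v.isLt⟩,
        by rw [pathGraph_adj]; right; simp; omega⟩
  have := part3 (Fin t) (pathGraph t) hcol hdeg hiso
  rwa [Fintype.card_fin] at this

open SimpleGraph in
lemma part2 (ℓ : ℕ) (hl : 3 ≤ ℓ) (heven : Even ℓ) :
    ℓ ≤ 2 * fo (SimpleGraph.cycleGraph ℓ) := by
  obtain ⟨n, rfl⟩ : ∃ n, ℓ = n + 3 := ⟨ℓ - 3, by omega⟩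
  have hcol : (cycleGraph (n + 3)).Colorable 2 := by
    refine ⟨SimpleGraph.Coloring.mk (fun x => (⟨x.val % 2, by omega⟩ : Fin 2)) ?_⟩
    intro a b hadj
    have hadj' : a - b = 1 ∨ b - a = 1 := cycleGraph_adj.mp hadj
    simp only [ne_eq, Fin.mk.injEq]
    have hval : ∀ x y : Fin (n + 3), x - y = 1 → ¬ (x.val % 2 = y.val % 2) := by
      intro x y h
      have hx : x = 1 + y := by
        rw [sub_eq_iff_eq_add'] at h
        rw [h]
        exact add_comm _ _
      have hxv : x.val = (1 + y.val) % (n + 3) := by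
        rw [hx, Fin.add_def]
        congr
      obtain ⟨k, hk⟩ := heven
      have hy := y.isLt
      rcases Nat.lt_or_ge (1 + y.val) (n + 3) with hlt | hge
      · rw [Nat.mod_eq_of_lt hlt] at hxv
        omega
      · have hyv : y.val = n + 2 := by omega
        rw [hyv] at hxv
        have h1 : 1 + (n + 2) = n + 3 := by omega
        rw [h1, Nat.mod_self] at hxv
        omega
    rcases hadj' with h | h
    · exact hval a b h
    · exact fun hc => hval b a h hc.symm
  have hdeg : ∀ v : Fin (n + 3), (cycleGraph (n + 3)).degree v ≤ 2 := by
    intro v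
    rw [cycleGraph_degree_three_le]
  have hiso : ∀ v : Fin (n + 3), ∃ w, (cycleGraph (n + 3)).Adj v w := by
    intro v
    refine ⟨v + 1, ?_⟩
    rw [cycleGraph_adj]
    right
    exact add_sub_cancel_left v 1
  have := part3 (Fin (n + 3)) (cycleGraph (n + 3)) hcol hdeg hiso
  rwa [Fintype.card_fin] at this

/-- Paths on ≥ 2 vertices and even cycles have odd induced subgraphs on at least half of
their vertices; consequently every bipartite graph with maximum degree ≤ 2 and no
isolated vertices satisfies `f_o(G) ≥ |V(G)|/2`. -/
theorem stmt_15 :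
    (∀ t : ℕ, 2 ≤ t → t ≤ 2 * fo (SimpleGraph.pathGraph t)) ∧
    (∀ ℓ : ℕ, 3 ≤ ℓ → Even ℓ → ℓ ≤ 2 * fo (SimpleGraph.cycleGraph ℓ)) ∧
    (∀ (V : Type) [Fintype V] (G : SimpleGraph V) [DecidableRel G.Adj],
      G.Colorable 2 → (∀ v, G.degree v ≤ 2) → (∀ v, ∃ w, G.Adj v w) →
      Fintype.card V ≤ 2 * fo G) := by
  exact ⟨part1, part2, fun V _ G _ h1 h2 h3 => part3 V G h1 h2 h3⟩
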